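/- arXiv:2507.05398 — 3 statements merged into one kernel-verified Lean document; each statement's English description precedes it below -/
import Mathlib

section
/- Let H be a complex Hilbert space with positive bounded operator A. For all a, b, e ∈ H with ‖e‖_A = 1, one has |⟨a,e⟩_A| + |⟨e,b⟩_A| ≤ √( (‖a‖_A + ‖b‖_A) · max{‖a‖_A, ‖b‖_A} + 2|⟨a,b⟩_A| ). -/
open scoped InnerProductSpace

variable {H : Type*} [NormedAddCommGroup H] [InnerProductSpace ℂ H] [CompleteSpace H]

/-- The `A`-semi-inner product `⟪x, y⟫_A = ⟪A x, y⟫`. -/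
noncomputable def ipA (A : H →L[ℂ] H) (x y : H) : ℂ := ⟪A x, y⟫_ℂ

/-- The `A`-semi-norm `‖x‖_A = √(re ⟪A x, x⟫)`. -/
noncomputable def nA (A : H →L[ℂ] H) (x : H) : ℝ := Real.sqrt (ipA A x x).re

section aux

open ComplexConjugate

set_option linter.unusedSectionVars false

variable (A : H →L[ℂ] H)

lemma ipA_conj (hA : A.IsPositive) (x y : H) : ipA A y x = conj (ipA A x y) := by
  have hs : (A : H →ₗ[ℂ] H).IsSymmetric :=
    (ContinuousLinearMap.isSelfAdjoint_iff_isSymmetric).mp hA.isSelfAdjoint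
  show ⟪A y, x⟫_ℂ = conj ⟪A x, y⟫_ℂ
  rw [← inner_conj_symm]
  exact congrArg conj (hs x y).symm

lemma ipA_re_nonneg (hA : A.IsPositive) (x : H) : 0 ≤ (ipA A x x).re :=
  (Complex.nonneg_iff.mp (hA.inner_nonneg_left x)).1

lemma ipA_add_left (x y z : H) : ipA A (x + y) z = ipA A x z + ipA A y z := by
  simp [ipA, inner_add_left]

lemma ipA_add_right (x y z : H) : ipA A x (y + z) = ipA A x y + ipA A x z := by
  simp [ipA, inner_add_right]

lemma ipA_smul_left (r : ℂ) (x y : H) : ipA A (r • x) y = conj r * ipA A x y := by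
  simp [ipA, inner_smul_left, mul_comm]

lemma ipA_smul_right (r : ℂ) (x y : H) : ipA A x (r • y) = r * ipA A x y := by
  simp [ipA, inner_smul_right]

lemma ipA_sub_right (x y z : H) : ipA A x (y - z) = ipA A x y - ipA A x z := by
  simp [ipA, inner_sub_right]

lemma ipA_sub_left (x y z : H) : ipA A (x - y) z = ipA A x z - ipA A y z := by
  simp [ipA, inner_sub_left]

/-- Core structure giving Cauchy–Schwarz. -/
noncomputable def ipACore (hA : A.IsPositive) : PreInnerProductSpace.Core ℂ H where
  inner x y := ipA A x y
  conj_inner_symm x y := (ipA_conj A hA y x).symm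
  re_inner_nonneg x := ipA_re_nonneg A hA x
  add_left := ipA_add_left A
  smul_left x y r := ipA_smul_left A r x y

lemma nA_nonneg (x : H) : 0 ≤ nA A x := Real.sqrt_nonneg _

lemma nA_sq (hA : A.IsPositive) (x : H) : nA A x ^ 2 = (ipA A x x).re :=
  Real.sq_sqrt (ipA_re_nonneg A hA x)

lemma ipA_cs (hA : A.IsPositive) (x y : H) :
    ‖ipA A x y‖ ≤ nA A x * nA A y := by
  have h := @InnerProductSpace.Core.inner_mul_inner_self_le ℂ H _ _ _ (ipACore A hA) x y
  have h0 : @inner ℂ H (ipACore A hA).toInner x y = ipA A x y := rfl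
  have h1 : @inner ℂ H (ipACore A hA).toInner y x = ipA A y x := rfl
  have h2 : @inner ℂ H (ipACore A hA).toInner x x = ipA A x x := rfl
  have h3 : @inner ℂ H (ipACore A hA).toInner y y = ipA A y y := rfl
  rw [h0, h1, h2, h3] at h
  have habs : ‖ipA A y x‖ = ‖ipA A x y‖ := by
    rw [ipA_conj A hA x y]; exact RCLike.norm_conj _
  have h' : ‖ipA A x y‖ * ‖ipA A x y‖ ≤ (ipA A x x).re * (ipA A y y).re := by
    calc ‖ipA A x y‖ * ‖ipA A x y‖ = ‖ipA A x y‖ * ‖ipA A y x‖ := by rw [habs]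
    _ ≤ _ := h
  rw [← nA_sq A hA x, ← nA_sq A hA y] at h'
  nlinarith [norm_nonneg (ipA A x y), mul_nonneg (nA_nonneg A x) (nA_nonneg A y)]

section aux2

open ComplexConjugate

variable (A : H →L[ℂ] H)

lemma ipA_e_self (hA : A.IsPositive) (e : H) (he : nA A e = 1) : ipA A e e = 1 := by
  have hre : (ipA A e e).re = 1 := by
    have := nA_sq A hA e
    rw [he] at this; simpa using this.symm
  have him : (ipA A e e).im = 0 := by
    have h := congrArg Complex.im (ipA_conj A hA e e)
    simp only [Complex.conj_im] at h
    linarith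
  apply Complex.ext
  · simpa using hre
  · simpa using him

/-- Boas–Bellman type inequality. -/
lemma boas (hA : A.IsPositive) (a b e : H) (he : nA A e = 1) :
    ‖ipA A a e‖ ^ 2 + ‖ipA A b e‖ ^ 2 ≤
      max (nA A a) (nA A b) ^ 2 + ‖ipA A a b‖ := by
  set α := ipA A a e with hα
  set β := ipA A b e with hβ
  set S : ℝ := ‖α‖ ^ 2 + ‖β‖ ^ 2 with hS
  set u : H := α • a + β • b with hu
  have hSnonneg : 0 ≤ S := by positivity
  set C : ℝ := max (nA A a) (nA A b) ^ 2 + ‖ipA A a b‖ with hC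
  have hCnonneg : 0 ≤ C := by positivity
  -- ⟪u, e⟫_A = S
  have h1 : ipA A u e = (S : ℂ) := by
    have ha : conj α * α = ((‖α‖ ^ 2 : ℝ) : ℂ) := by
      rw [mul_comm, Complex.mul_conj, Complex.normSq_eq_norm_sq]
    have hb : conj β * β = ((‖β‖ ^ 2 : ℝ) : ℂ) := by
      rw [mul_comm, Complex.mul_conj, Complex.normSq_eq_norm_sq]
    rw [hu, ipA_add_left, ipA_smul_left, ipA_smul_left, ← hα, ← hβ, ha, hb, hS]
    push_cast; ring
  -- S ≤ nA u
  have h2 : S ≤ nA A u := by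
    have := ipA_cs A hA u e
    rw [h1, he, mul_one] at this
    simpa [abs_of_nonneg hSnonneg] using this
  -- expansion of ⟪u,u⟫_A
  set w : ℂ := conj α * β * ipA A a b with hw
  have h3 : ipA A u u = ((‖α‖ ^ 2 : ℝ) : ℂ) * ipA A a a
      + ((‖β‖ ^ 2 : ℝ) : ℂ) * ipA A b b + (w + conj w) := by
    simp only [hu, ipA_add_left, ipA_add_right, ipA_smul_left, ipA_smul_right]
    rw [ipA_conj A hA a b]
    have ha : conj α * α = ((‖α‖ ^ 2 : ℝ) : ℂ) := by
      rw [mul_comm, Complex.mul_conj, Complex.normSq_eq_norm_sq]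
    have hb : conj β * β = ((‖β‖ ^ 2 : ℝ) : ℂ) := by
      rw [mul_comm, Complex.mul_conj, Complex.normSq_eq_norm_sq]
    rw [hw]
    simp only [map_mul, Complex.conj_conj]
    rw [← ha, ← hb]
    ring
  have h4 : (ipA A u u).re = ‖α‖ ^ 2 * (ipA A a a).re
      + ‖β‖ ^ 2 * (ipA A b b).re + 2 * w.re := by
    rw [h3, Complex.add_conj]
    simp [Complex.add_re, Complex.mul_re, Complex.ofReal_re, Complex.ofReal_im, ← Complex.ofReal_pow]
  have h5 : w.re ≤ ‖α‖ * ‖β‖ * ‖ipA A a b‖ := by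
    calc w.re ≤ ‖w‖ := Complex.re_le_norm w
    _ = ‖α‖ * ‖β‖ * ‖ipA A a b‖ := by
      rw [hw]; simp [map_mul]
  have hna : (ipA A a a).re ≤ max (nA A a) (nA A b) ^ 2 := by
    rw [← nA_sq A hA a]
    exact pow_le_pow_left₀ (nA_nonneg A a) (le_max_left _ _) 2
  have hnb : (ipA A b b).re ≤ max (nA A a) (nA A b) ^ 2 := by
    rw [← nA_sq A hA b]
    exact pow_le_pow_left₀ (nA_nonneg A b) (le_max_right _ _) 2
  -- S^2 ≤ S * C
  have h6 : S ^ 2 ≤ S * C := by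
    have hu2 : S ^ 2 ≤ (ipA A u u).re := by
      rw [← nA_sq A hA u]
      exact pow_le_pow_left₀ hSnonneg h2 2
    have h2ab : 2 * (‖α‖ * ‖β‖) ≤ S := by
      rw [hS]; nlinarith [sq_nonneg (‖α‖ - ‖β‖)]
    rw [hC]
    nlinarith [norm_nonneg α, norm_nonneg β, norm_nonneg (ipA A a b),
      sq_nonneg (‖α‖ - ‖β‖)]
  rcases eq_or_lt_of_le hSnonneg with h | h
  · rw [hS] at h; rw [hC] at hCnonneg; nlinarith [hCnonneg]
  · have : S * S ≤ S * C := by nlinarith [h6]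
    have := le_of_mul_le_mul_left this h
    rw [hS, hC] at this; exact this

/-- Buzano type inequality. -/
lemma buzano (hA : A.IsPositive) (a b e : H) (he : nA A e = 1) :
    2 * (‖ipA A a e‖ * ‖ipA A e b‖) ≤
      nA A a * nA A b + ‖ipA A a b‖ := by
  set β := ipA A e b with hβ
  set c : H := (2 * β) • e - b with hc
  have hee := ipA_e_self A hA e he
  have hbe : ipA A b e = conj β := ipA_conj A hA e b
  have hcc : ipA A c c = ipA A b b := by
    rw [hc, ipA_sub_left, ipA_sub_right, ipA_sub_right, ipA_smul_left, ipA_smul_left,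
      ipA_smul_right, ipA_smul_right, hee, hbe]
    simp only [map_mul, Complex.conj_conj, map_ofNat]
    ring
  have hnc : nA A c = nA A b := by
    rw [nA, nA, hcc]
  have hsac : ipA A a c = 2 * β * ipA A a e - ipA A a b := by
    rw [hc, ipA_sub_right, ipA_smul_right]
  have hcs := ipA_cs A hA a c
  rw [hsac, hnc] at hcs
  have htri : ‖2 * β * ipA A a e‖ ≤
      ‖2 * β * ipA A a e - ipA A a b‖ + ‖ipA A a b‖ := by
    calc ‖2 * β * ipA A a e‖
        = ‖(2 * β * ipA A a e - ipA A a b) + ipA A a b‖ := by ring_nf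
    _ ≤ _ := norm_add_le _ _
  have habs : ‖2 * β * ipA A a e‖
      = 2 * (‖ipA A a e‖ * ‖β‖) := by
    simp [map_mul]; ring
  rw [habs] at htri
  linarith

end aux2

theorem stmt7 (A : H →L[ℂ] H) (hA : A.IsPositive) (a b e : H) (he : nA A e = 1) :
    ‖ipA A a e‖ + ‖ipA A e b‖ ≤
      Real.sqrt ((nA A a + nA A b) * max (nA A a) (nA A b) +
        2 * ‖ipA A a b‖) := by
  have h1 := boas A hA a b e he
  have h2 := buzano A hA a b e he
  have hbe : ‖ipA A b e‖ = ‖ipA A e b‖ := by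
    rw [ipA_conj A hA e b]
    exact Complex.norm_conj _
  rw [hbe] at h1
  apply Real.le_sqrt_of_sq_le
  have hM : max (nA A a) (nA A b) ^ 2 + nA A a * nA A b ≤
      (nA A a + nA A b) * max (nA A a) (nA A b) := by
    rcases max_cases (nA A a) (nA A b) with ⟨h, h'⟩ | ⟨h, h'⟩ <;> rw [h] <;> nlinarith []
  nlinarith [norm_nonneg (ipA A a e), norm_nonneg (ipA A e b)]
end aux
end

section
/- Let H be a complex Hilbert space, A a positive bounded operator, and T an operator admitting an A-adjoint T^♯ (i.e. ⟨Tx,y⟩_A = ⟨x,T^♯y⟩_A for all x,y). For α ∈ [0,1] and β ≥ 0, set γ₁ = ((2β+1)(1+α²)+2α)/(1+β) and γ₂ = ((1−α)(2+(1+α)(1+2β)))/(1+β). Then w_A(T)⁴ ≤ (γ₁/16) ‖T^♯T + TT^♯‖_A² + (γ₂/8) ‖T^♯T + TT^♯‖_A · w_A(T²), where w_A(S) = sup{ |⟨Sx,x⟩_A| : ‖x‖_A = 1 } and ‖S‖_A = sup{ ‖Sx‖_A : ‖x‖_A = 1 }. -/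
open scoped InnerProductSpace ComplexConjugate

variable {H : Type*} [NormedAddCommGroup H] [InnerProductSpace ℂ H] [CompleteSpace H]

/-- The `A`-numerical radius. -/
noncomputable def wA (A T : H →L[ℂ] H) : ℝ :=
  sSup {c : ℝ | ∃ x : H, nA A x = 1 ∧ c = ‖ipA A (T x) x‖}

/-- The `A`-operator seminorm. -/
noncomputable def opA (A T : H →L[ℂ] H) : ℝ :=
  sSup {c : ℝ | ∃ x : H, nA A x = 1 ∧ c = nA A (T x)}

/-- Buzano's inequality. -/
lemma buzano_aux (a b e : H) (he : ‖e‖ = 1) :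
    ‖⟪a, e⟫_ℂ * ⟪e, b⟫_ℂ‖ ≤ (‖a‖ * ‖b‖ + ‖⟪a, b⟫_ℂ‖) / 2 := by
  set r : H := (2:ℂ) • (⟪e, a⟫_ℂ • e) - a with hr
  have key : ‖r‖ = ‖a‖ := by
    have h2 : ‖r‖^2 = ‖a‖^2 := by
      rw [← @inner_self_eq_norm_sq ℂ, ← @inner_self_eq_norm_sq ℂ]
      simp only [hr, inner_sub_left, inner_sub_right, inner_smul_left, inner_smul_right,
        inner_conj_symm, map_ofNat]
      have hee : ⟪e, e⟫_ℂ = 1 := by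
        rw [@inner_self_eq_norm_sq_to_K ℂ, he]; norm_num
      rw [hee, ← inner_conj_symm a e]
      ring_nf
    have := norm_nonneg r; have := norm_nonneg a; nlinarith
  have hrb : ⟪r, b⟫_ℂ = 2 * (conj ⟪e, a⟫_ℂ * ⟪e, b⟫_ℂ) - ⟪a, b⟫_ℂ := by
    simp only [hr, inner_sub_left, inner_smul_left, map_ofNat]
  have h1 : ‖2 * (conj ⟪e, a⟫_ℂ * ⟪e, b⟫_ℂ)‖
      ≤ ‖⟪r, b⟫_ℂ‖ + ‖⟪a, b⟫_ℂ‖ := by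
    calc ‖2 * (conj ⟪e, a⟫_ℂ * ⟪e, b⟫_ℂ)‖
        = ‖⟪r, b⟫_ℂ + ⟪a, b⟫_ℂ‖ := by rw [hrb, sub_add_cancel]
      _ ≤ _ := norm_add_le _ _
  have h2 : ‖⟪r, b⟫_ℂ‖ ≤ ‖a‖ * ‖b‖ := by
    calc ‖⟪r, b⟫_ℂ‖ = ‖⟪r, b⟫_ℂ‖ := rfl
      _ ≤ ‖r‖ * ‖b‖ := norm_inner_le_norm r b
      _ = ‖a‖ * ‖b‖ := by rw [key]
  have h3 : ‖⟪a, e⟫_ℂ * ⟪e, b⟫_ℂ‖ = ‖conj ⟪e, a⟫_ℂ * ⟪e, b⟫_ℂ‖ := by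
    rw [inner_conj_symm]
  have h4 : ‖2 * (conj ⟪e, a⟫_ℂ * ⟪e, b⟫_ℂ)‖
      = 2 * ‖conj ⟪e, a⟫_ℂ * ⟪e, b⟫_ℂ‖ := by
    rw [norm_mul]; simp
  rw [h3]; linarith [h4 ▸ h1]

/-- Arithmetic core. -/
lemma arith_aux (g1 g2 d P Q : ℝ) (h1 : 1 ≤ g1) (h2 : 0 ≤ g2) (hsum : g1 + g2 = 4)
    (hd : 0 ≤ d) (hP : 0 ≤ P) (hQ : 0 ≤ Q) (hdP : d ≤ P) (hdPQ : 2 * d ≤ P + Q) :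
    d ^ 2 ≤ g1 / 4 * P ^ 2 + g2 / 4 * (P * Q) := by
  rcases le_total Q P with h | h
  · nlinarith [mul_nonneg (sub_nonneg.2 h1) (mul_nonneg hP (sub_nonneg.2 h)),
      mul_nonneg hP hQ, sq_nonneg (P + Q - 2*d), mul_nonneg hQ (sub_nonneg.2 h)]
  · nlinarith [mul_nonneg h2 (mul_nonneg hP (sub_nonneg.2 h)), mul_nonneg hd (sub_nonneg.2 hdP)]

set_option synthInstance.maxHeartbeats 1000000 in
set_option maxHeartbeats 1000000 in
/-- Square root of a positive operator. -/
lemma sqrt_aux (A : H →L[ℂ] H) (hA : A.IsPositive) :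
    ∃ R : H →L[ℂ] H, ∀ x y : H, ipA A x y = ⟪R x, R y⟫_ℂ := by
  have h0 : (0:H →L[ℂ] H) ≤ A := (ContinuousLinearMap.nonneg_iff_isPositive A).mpr hA
  set R := CFC.sqrt A with hRdef
  have hRpos : R.IsPositive := (ContinuousLinearMap.nonneg_iff_isPositive _).mp (CFC.sqrt_nonneg A)
  have hRR : ∀ x : H, R (R x) = A x := by
    have := CFC.sqrt_mul_sqrt_self A h0
    intro x
    simpa [ContinuousLinearMap.mul_apply] using congrArg (fun S : H →L[ℂ] H => S x) this
  have hadj : ContinuousLinearMap.adjoint R = R := by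
    rw [← ContinuousLinearMap.star_eq_adjoint]; exact hRpos.isSelfAdjoint
  refine ⟨R, fun x y => ?_⟩
  have h2 := ContinuousLinearMap.adjoint_inner_left R y (R x)
  rw [hadj] at h2
  rw [ipA, ← hRR x, h2]

set_option maxHeartbeats 1000000 in
theorem stmt9 (A : H →L[ℂ] H) (hA : A.IsPositive) (T Ts : H →L[ℂ] H)
    (hadj : ∀ x y : H, ipA A (T x) y = ipA A x (Ts y))
    (α β : ℝ) (hα : α ∈ Set.Icc (0 : ℝ) 1) (hβ : 0 ≤ β) :
    wA A T ^ 4 ≤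
      (((2 * β + 1) * (1 + α ^ 2) + 2 * α) / (1 + β)) / 16 *
          opA A (Ts ∘L T + T ∘L Ts) ^ 2 +
        (((1 - α) * (2 + (1 + α) * (1 + 2 * β))) / (1 + β)) / 8 *
          (opA A (Ts ∘L T + T ∘L Ts) * wA A (T ∘L T)) := by
  obtain ⟨R, hip⟩ := sqrt_aux A hA
  have hnA : ∀ x : H, nA A x = ‖R x‖ := by
    intro x
    rw [nA, hip]
    rw [show (⟪R x, R x⟫_ℂ).re = RCLike.re ⟪R x, R x⟫_ℂ from rfl, inner_self_eq_norm_sq,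
      Real.sqrt_sq (norm_nonneg _)]
  have habssq : ∀ u : H, ‖⟪u, u⟫_ℂ‖ = ‖u‖ ^ 2 := by
    intro u
    rw [@inner_self_eq_norm_sq_to_K ℂ]
    simp [norm_pow]
  have hresq : ∀ u : H, (⟪u, u⟫_ℂ).re = ‖u‖ ^ 2 := by
    intro u
    rw [show (⟪u, u⟫_ℂ).re = RCLike.re ⟪u, u⟫_ℂ from rfl, inner_self_eq_norm_sq]
  obtain ⟨hα0, hα1⟩ := hα
  -- coefficients
  set g1 : ℝ := ((2 * β + 1) * (1 + α ^ 2) + 2 * α) / (1 + β) with hg1def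
  set g2 : ℝ := ((1 - α) * (2 + (1 + α) * (1 + 2 * β))) / (1 + β) with hg2def
  have hb1 : (0:ℝ) < 1 + β := by linarith
  have hg1 : 1 ≤ g1 := by
    rw [hg1def, le_div_iff₀ hb1]; nlinarith [sq_nonneg α]
  have hg2 : 0 ≤ g2 := by
    rw [hg2def]; apply div_nonneg _ hb1.le
    apply mul_nonneg (by linarith)
    nlinarith
  have hgsum : g1 + g2 = 4 := by
    rw [hg1def, hg2def, ← add_div, div_eq_iff hb1.ne']; ring
  set S : H →L[ℂ] H := Ts ∘L T + T ∘L Ts with hSdef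
  -- nonnegativity of the sSup quantities
  have hP0 : 0 ≤ opA A S := by
    unfold opA
    apply Real.sSup_nonneg
    rintro c ⟨x, hx, rfl⟩; rw [nA]; exact Real.sqrt_nonneg _
  have hQ0 : 0 ≤ wA A (T ∘L T) := by
    unfold wA
    apply Real.sSup_nonneg
    rintro c ⟨x, hx, rfl⟩; exact norm_nonneg _
  set RHS : ℝ := g1 / 16 * opA A S ^ 2 + g2 / 8 * (opA A S * wA A (T ∘L T)) with hRHSdef
  have hRHS0 : 0 ≤ RHS := by
    apply add_nonneg
    · exact mul_nonneg (by positivity) (sq_nonneg _)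
    · exact mul_nonneg (div_nonneg hg2 (by norm_num)) (mul_nonneg hP0 hQ0)
  by_cases hne : ∃ x : H, nA A x = 1
  case neg =>
    have hW : {c : ℝ | ∃ x : H, nA A x = 1 ∧ c = ‖ipA A (T x) x‖} = ∅ := by
      ext c; simp only [Set.mem_setOf_eq, Set.mem_empty_iff_false, iff_false]
      rintro ⟨x, hx, -⟩; exact hne ⟨x, hx⟩
    rw [wA, hW, Real.sSup_empty]
    simpa using hRHS0
  case pos =>
  by_cases hbdd : BddAbove {c : ℝ | ∃ x : H, nA A x = 1 ∧ c = ‖ipA A (T x) x‖}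
  case neg =>
    rw [wA, Real.sSup_of_not_bddAbove hbdd]
    simpa using hRHS0
  case pos =>
  obtain ⟨m, hm⟩ := hbdd
  obtain ⟨x₀, hx₀⟩ := hne
  have hm0 : 0 ≤ m :=
    le_trans (norm_nonneg _) (hm ⟨x₀, hx₀, rfl⟩)
  -- L1 : pointwise numerical bound
  have L1 : ∀ y : H, ‖ipA A (T y) y‖ ≤ m * ‖R y‖ ^ 2 := by
    intro y
    by_cases hy : ‖R y‖ = 0
    · have h0 : R y = 0 := norm_eq_zero.mp hy
      rw [hip, h0, inner_zero_right, norm_zero]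
      positivity
    · set c : ℂ := ((‖R y‖ : ℝ) : ℂ)⁻¹ with hc
      have hcn : ‖c‖ = ‖R y‖⁻¹ := by
        rw [hc, norm_inv, Complex.norm_real, norm_norm]
      have hu : nA A (c • y) = 1 := by
        rw [hnA, map_smul, norm_smul, hcn, inv_mul_cancel₀ hy]
      have hmem := hm ⟨c • y, hu, rfl⟩
      have hval : ipA A (T (c • y)) (c • y) = conj c * c * ipA A (T y) y := by
        rw [hip, hip, map_smul, map_smul, map_smul, inner_smul_left, inner_smul_right]
        ring
      have habs : ‖ipA A (T (c • y)) (c • y)‖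
          = ‖R y‖⁻¹ ^ 2 * ‖ipA A (T y) y‖ := by
        rw [hval, norm_mul, norm_mul, Complex.norm_conj, hcn]; ring
      rw [habs] at hmem
      have hexp : ‖ipA A (T y) y‖
          = ‖R y‖ ^ 2 * (‖R y‖⁻¹ ^ 2 * ‖ipA A (T y) y‖) := by
        field_simp
      rw [hexp]
      calc ‖R y‖ ^ 2 * (‖R y‖⁻¹ ^ 2 * ‖ipA A (T y) y‖)
          ≤ ‖R y‖ ^ 2 * m := mul_le_mul_of_nonneg_left hmem (sq_nonneg _)
        _ = m * ‖R y‖ ^ 2 := by ring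
  -- polarization identity
  have pol : ∀ y z : H, ipA A (T y) z =
      (ipA A (T (y + z)) (y + z) - ipA A (T (y - z)) (y - z)
        - Complex.I * (ipA A (T (y + Complex.I • z)) (y + Complex.I • z)
          - ipA A (T (y - Complex.I • z)) (y - Complex.I • z))) / 4 := by
    intro y z
    simp only [hip, map_add, map_sub, map_smul, inner_add_left, inner_add_right,
      inner_sub_left, inner_sub_right, inner_smul_left, inner_smul_right, Complex.conj_I]
    ring_nf
    rw [Complex.I_sq]
    ring
  -- L2raw
  have L2raw : ∀ y z : H, ‖ipA A (T y) z‖ ≤ m * (‖R y‖ ^ 2 + ‖R z‖ ^ 2) := by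
    intro y z
    rw [pol y z]
    set Qa := ipA A (T (y + z)) (y + z)
    set Qb := ipA A (T (y - z)) (y - z)
    set Qc := ipA A (T (y + Complex.I • z)) (y + Complex.I • z)
    set Qd := ipA A (T (y - Complex.I • z)) (y - Complex.I • z)
    have tri : ‖Qa - Qb - Complex.I * (Qc - Qd)‖
        ≤ ‖Qa‖ + ‖Qb‖ + (‖Qc‖ + ‖Qd‖) := by
      calc ‖Qa - Qb - Complex.I * (Qc - Qd)‖
          ≤ ‖Qa - Qb‖ + ‖Complex.I * (Qc - Qd)‖ := norm_sub_le _ _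
        _ ≤ ‖Qa‖ + ‖Qb‖ + (‖Qc‖ + ‖Qd‖) := by
            have t1 := norm_sub_le Qa Qb
            have t2 : ‖Complex.I * (Qc - Qd)‖ = ‖Qc - Qd‖ := by
              rw [norm_mul, Complex.norm_I, one_mul]
            have t3 := norm_sub_le Qc Qd
            linarith
    have habsdiv : ‖(Qa - Qb - Complex.I * (Qc - Qd)) / 4‖
        = ‖Qa - Qb - Complex.I * (Qc - Qd)‖ / 4 := by
      rw [norm_div]; norm_num
    have hQa := L1 (y + z)
    have hQb := L1 (y - z)
    have hQc := L1 (y + Complex.I • z)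
    have hQd := L1 (y - Complex.I • z)
    have hpar1 : ‖R (y + z)‖ ^ 2 + ‖R (y - z)‖ ^ 2 = 2 * (‖R y‖ ^ 2 + ‖R z‖ ^ 2) := by
      rw [map_add, map_sub]
      simpa [pow_two] using parallelogram_law_with_norm ℂ (R y) (R z)
    have hpar2 : ‖R (y + Complex.I • z)‖ ^ 2 + ‖R (y - Complex.I • z)‖ ^ 2
        = 2 * (‖R y‖ ^ 2 + ‖R z‖ ^ 2) := by
      have hsm : R (Complex.I • z) = Complex.I • R z := map_smul R _ _
      rw [map_add, map_sub, hsm]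
      have hpl := parallelogram_law_with_norm ℂ (R y) (Complex.I • R z)
      rw [norm_smul, Complex.norm_I, one_mul] at hpl
      simpa [pow_two] using hpl
    have b1 : ‖Qa‖ ≤ m * ‖R (y + z)‖ ^ 2 := hQa
    have b2 : ‖Qb‖ ≤ m * ‖R (y - z)‖ ^ 2 := hQb
    have b3 : ‖Qc‖ ≤ m * ‖R (y + Complex.I • z)‖ ^ 2 := hQc
    have b4 : ‖Qd‖ ≤ m * ‖R (y - Complex.I • z)‖ ^ 2 := hQd
    rw [habsdiv]
    have hfin : (m * ‖R (y + z)‖ ^ 2 + m * ‖R (y - z)‖ ^ 2 + (m * ‖R (y + Complex.I • z)‖ ^ 2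
        + m * ‖R (y - Complex.I • z)‖ ^ 2)) / 4 = m * (‖R y‖ ^ 2 + ‖R z‖ ^ 2) := by
      linear_combination (m / 4) * hpar1 + (m / 4) * hpar2
    linarith [tri, b1, b2, b3, b4]
  -- L2 : product form
  have L2 : ∀ y z : H, ‖ipA A (T y) z‖ ≤ 2 * m * (‖R y‖ * ‖R z‖) := by
    intro y z
    by_cases hz : ‖R z‖ = 0
    · have h0 : R z = 0 := norm_eq_zero.mp hz
      rw [hip, h0, inner_zero_right, norm_zero]
      exact mul_nonneg (by linarith) (by positivity)
    by_cases hy : ‖R y‖ = 0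
    · have h0 : R y = 0 := norm_eq_zero.mp hy
      rw [hadj, hip, h0, inner_zero_left, norm_zero]
      exact mul_nonneg (by linarith) (by positivity)
    have hzpos : 0 < ‖R z‖ := lt_of_le_of_ne (norm_nonneg _) (Ne.symm hz)
    have hypos : 0 < ‖R y‖ := lt_of_le_of_ne (norm_nonneg _) (Ne.symm hy)
    set s : ℝ := ‖R y‖ / ‖R z‖ with hs
    have hspos : 0 < s := div_pos hypos hzpos
    have hsz : s * ‖R z‖ = ‖R y‖ := div_mul_cancel₀ _ hz
    have key := L2raw y ((s : ℂ) • z)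
    have e1 : ipA A (T y) ((s : ℂ) • z) = (s : ℂ) * ipA A (T y) z := by
      rw [hip, hip, map_smul, inner_smul_right]
    have e2 : ‖ipA A (T y) ((s : ℂ) • z)‖ = s * ‖ipA A (T y) z‖ := by
      rw [e1, norm_mul, Complex.norm_real, Real.norm_of_nonneg hspos.le]
    have e3 : ‖R ((s : ℂ) • z)‖ = s * ‖R z‖ := by
      rw [map_smul, norm_smul, Complex.norm_real, Real.norm_of_nonneg hspos.le]
    rw [e2, e3] at key
    have e4 : s * (2 * m * (‖R y‖ * ‖R z‖)) = m * (‖R y‖ ^ 2 + (s * ‖R z‖) ^ 2) := by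
      rw [hsz]; rw [← hsz]; ring
    exact le_of_mul_le_mul_left (e4 ▸ key) hspos
  -- L3 : A-norm bound for T
  have L3 : ∀ y : H, ‖R (T y)‖ ≤ 2 * m * ‖R y‖ := by
    intro y
    rcases eq_or_lt_of_le (norm_nonneg (R (T y))) with h0 | hpos
    · rw [← h0]
      exact mul_nonneg (mul_nonneg (by norm_num) hm0) (norm_nonneg _)
    · have hb := L2 y (T y)
      have he : ‖ipA A (T y) (T y)‖ = ‖R (T y)‖ ^ 2 := by
        rw [hip]; exact habssq _
      rw [he] at hb
      have h5 : ‖R (T y)‖ * ‖R (T y)‖ ≤ (2 * m * ‖R y‖) * ‖R (T y)‖ := by nlinarith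
      exact le_of_mul_le_mul_right h5 hpos
  -- L3s : A-norm bound for Ts
  have L3s : ∀ y : H, ‖R (Ts y)‖ ≤ 2 * m * ‖R y‖ := by
    intro y
    rcases eq_or_lt_of_le (norm_nonneg (R (Ts y))) with h0 | hpos
    · rw [← h0]
      exact mul_nonneg (mul_nonneg (by norm_num) hm0) (norm_nonneg _)
    · have hb := L2 (Ts y) y
      have he : ‖ipA A (T (Ts y)) y‖ = ‖R (Ts y)‖ ^ 2 := by
        rw [hadj, hip]; exact habssq _
      rw [he] at hb
      have h5 : ‖R (Ts y)‖ * ‖R (Ts y)‖ ≤ (2 * m * ‖R y‖) * ‖R (Ts y)‖ := by nlinarith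
      exact le_of_mul_le_mul_right h5 hpos
  -- boundedness of the other two sets
  have hW2b : BddAbove {c : ℝ | ∃ x : H, nA A x = 1 ∧ c = ‖ipA A ((T ∘L T) x) x‖} := by
    refine ⟨4 * m ^ 2, ?_⟩
    rintro c ⟨x, hx, rfl⟩
    have hx1 : ‖R x‖ = 1 := by rw [← hnA]; exact hx
    have h1 : ‖ipA A ((T ∘L T) x) x‖ = ‖ipA A (T (T x)) x‖ := by
      rw [ContinuousLinearMap.comp_apply]
    rw [h1]
    calc ‖ipA A (T (T x)) x‖ ≤ 2 * m * (‖R (T x)‖ * ‖R x‖) := L2 (T x) x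
      _ ≤ 2 * m * ((2 * m * ‖R x‖) * ‖R x‖) := by
          apply mul_le_mul_of_nonneg_left _ (by positivity)
          exact mul_le_mul_of_nonneg_right (L3 x) (norm_nonneg _)
      _ = 4 * m ^ 2 := by rw [hx1]; ring
  have hOb : BddAbove {c : ℝ | ∃ x : H, nA A x = 1 ∧ c = nA A (S x)} := by
    refine ⟨8 * m ^ 2, ?_⟩
    rintro c ⟨x, hx, rfl⟩
    have hx1 : ‖R x‖ = 1 := by rw [← hnA]; exact hx
    have hSx : S x = Ts (T x) + T (Ts x) := by
      simp [hSdef, ContinuousLinearMap.add_apply, ContinuousLinearMap.comp_apply]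
    rw [hnA, hSx, map_add]
    calc ‖R (Ts (T x)) + R (T (Ts x))‖ ≤ ‖R (Ts (T x))‖ + ‖R (T (Ts x))‖ := norm_add_le _ _
      _ ≤ 2 * m * ‖R (T x)‖ + 2 * m * ‖R (Ts x)‖ := add_le_add (L3s _) (L3 _)
      _ ≤ 2 * m * (2 * m * ‖R x‖) + 2 * m * (2 * m * ‖R x‖) := by
          have := mul_le_mul_of_nonneg_left (L3 x) (by positivity : (0:ℝ) ≤ 2 * m)
          have := mul_le_mul_of_nonneg_left (L3s x) (by positivity : (0:ℝ) ≤ 2 * m)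
          linarith
      _ = 8 * m ^ 2 := by rw [hx1]; ring
  -- the key pointwise estimate
  have keypt : ∀ c ∈ {c : ℝ | ∃ x : H, nA A x = 1 ∧ c = ‖ipA A (T x) x‖},
      c ^ 4 ≤ RHS := by
    rintro c ⟨x, hx, rfl⟩
    have hx1 : ‖R x‖ = 1 := by rw [← hnA]; exact hx
    set a : ℝ := ‖ipA A (T x) x‖ with ha
    have ha0 : 0 ≤ a := norm_nonneg _
    set p : ℝ := ‖R (T x)‖ * ‖R (Ts x)‖ with hp
    -- f1 : a ≤ ‖R (T x)‖
    have f1 : a ≤ ‖R (T x)‖ := by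
      rw [ha, hip]
      calc ‖⟪R (T x), R x⟫_ℂ‖ ≤ ‖R (T x)‖ * ‖R x‖ := norm_inner_le_norm _ _
        _ = ‖R (T x)‖ := by rw [hx1, mul_one]
    -- f1' : a ≤ ‖R (Ts x)‖
    have f1' : a ≤ ‖R (Ts x)‖ := by
      rw [ha, hadj, hip]
      calc ‖⟪R x, R (Ts x)⟫_ℂ‖ ≤ ‖R x‖ * ‖R (Ts x)‖ := norm_inner_le_norm _ _
        _ = ‖R (Ts x)‖ := by rw [hx1, one_mul]
    have fsq : a ^ 2 ≤ p := by
      rw [hp]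
      calc a ^ 2 = a * a := sq a
        _ ≤ ‖R (T x)‖ * ‖R (Ts x)‖ := mul_le_mul f1 f1' ha0 (norm_nonneg _)
    -- f2 : 2 * p ≤ nA A (S x)
    have e5 : ipA A (Ts x) (Ts x) = ipA A x (T (Ts x)) := by
      have h := hadj (Ts x) x
      calc ipA A (Ts x) (Ts x) = conj (ipA A (Ts x) (Ts x)) := by
            rw [hip, inner_conj_symm]
        _ = conj (ipA A (T (Ts x)) x) := by rw [h]
        _ = ipA A x (T (Ts x)) := by rw [hip, hip, inner_conj_symm]
    have hSx : S x = Ts (T x) + T (Ts x) := by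
      simp [hSdef, ContinuousLinearMap.add_apply, ContinuousLinearMap.comp_apply]
    have e6 : ipA A x (S x) = ipA A (T x) (T x) + ipA A (Ts x) (Ts x) := by
      rw [hip, hSx, map_add, inner_add_right, ← hip, ← hip, ← hadj x (T x), ← e5]
    have f2 : 2 * p ≤ nA A (S x) := by
      have h1 : (ipA A x (S x)).re = ‖R (T x)‖ ^ 2 + ‖R (Ts x)‖ ^ 2 := by
        rw [e6]
        have r1 : (ipA A (T x) (T x)).re = ‖R (T x)‖ ^ 2 := by rw [hip]; exact hresq _
        have r2 : (ipA A (Ts x) (Ts x)).re = ‖R (Ts x)‖ ^ 2 := by rw [hip]; exact hresq _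
        rw [Complex.add_re, r1, r2]
      have h2 : (ipA A x (S x)).re ≤ ‖R (S x)‖ := by
        calc (ipA A x (S x)).re ≤ ‖ipA A x (S x)‖ := Complex.re_le_norm _
          _ = ‖⟪R x, R (S x)⟫_ℂ‖ := by rw [hip]
          _ ≤ ‖R x‖ * ‖R (S x)‖ := norm_inner_le_norm _ _
          _ = ‖R (S x)‖ := by rw [hx1, one_mul]
      have h3 : 2 * p ≤ ‖R (T x)‖ ^ 2 + ‖R (Ts x)‖ ^ 2 := by
        rw [hp]; nlinarith [sq_nonneg (‖R (T x)‖ - ‖R (Ts x)‖)]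
      rw [hnA]
      linarith
    have f2' : nA A (S x) ≤ opA A S := by
      unfold opA; exact le_csSup hOb ⟨x, hx, rfl⟩
    -- f3 : Buzano
    set q : ℝ := ‖ipA A ((T ∘L T) x) x‖ with hq
    have f3 : 2 * a ^ 2 ≤ p + q := by
      have hbz := buzano_aux (R (T x)) (R (Ts x)) (R x) hx1
      have hl : ‖⟪R (T x), R x⟫_ℂ * ⟪R x, R (Ts x)⟫_ℂ‖ = a ^ 2 := by
        rw [← hip, ← hip, ← hadj x x, norm_mul, ← ha, sq]
      have hr : ‖⟪R (T x), R (Ts x)⟫_ℂ‖ = q := by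
        rw [← hip]
        show ‖ipA A (T x) (Ts x)‖ = ‖ipA A ((T ∘L T) x) x‖
        rw [ContinuousLinearMap.comp_apply, hadj (T x) x]
      rw [hl, hr, ← hp] at hbz
      linarith
    have f3' : q ≤ wA A (T ∘L T) := by
      unfold wA; exact le_csSup hW2b ⟨x, hx, rfl⟩
    -- assemble via the arithmetic lemma
    have harith := arith_aux g1 g2 (a ^ 2) (opA A S / 2) (wA A (T ∘L T)) hg1 hg2 hgsum
      (sq_nonneg a) (by linarith) hQ0 (by linarith) (by linarith)
    calc a ^ 4 = (a ^ 2) ^ 2 := by ring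
      _ ≤ g1 / 4 * (opA A S / 2) ^ 2 + g2 / 4 * (opA A S / 2 * wA A (T ∘L T)) := harith
      _ = RHS := by rw [hRHSdef]; ring
  -- conclude
  set M : ℝ := Real.sqrt (Real.sqrt RHS) with hM
  have hM0 : 0 ≤ M := Real.sqrt_nonneg _
  have hM4 : M ^ 4 = RHS := by
    have hM2 : M ^ 2 = Real.sqrt RHS := Real.sq_sqrt (Real.sqrt_nonneg _)
    calc M ^ 4 = (M ^ 2) ^ 2 := by ring
      _ = Real.sqrt RHS ^ 2 := by rw [hM2]
      _ = RHS := Real.sq_sqrt hRHS0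
  have hWle : wA A T ≤ M := by
    unfold wA
    apply Real.sSup_le _ hM0
    intro c hc
    have hc0 : 0 ≤ c := by
      obtain ⟨x, hx, rfl⟩ := hc
      exact norm_nonneg _
    have hc4 : c ^ 4 ≤ M ^ 4 := by rw [hM4]; exact keypt c hc
    exact (pow_le_pow_iff_left₀ hc0 hM0 (by norm_num)).mp hc4
  have hW0 : 0 ≤ wA A T := by
    unfold wA
    apply Real.sSup_nonneg
    rintro c ⟨x, hx, rfl⟩; exact norm_nonneg _
  calc wA A T ^ 4 ≤ M ^ 4 := pow_le_pow_left₀ hW0 hWle 4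
    _ = RHS := hM4
end

section
/- Let H be a complex Hilbert space, A a positive bounded operator, and T a bounded operator admitting an A-adjoint T^♯. For all α ∈ [0,1] and β ≥ 0 (and exponent r = 1), one has w_A(T)⁴ ≤ ((1+α+2β)/(8(1+β))) ‖T^♯T + TT^♯‖_A² + ((1−α)/(2(1+β))) w_A(T²)². -/
open scoped InnerProductSpace

variable {H : Type*} [NormedAddCommGroup H] [InnerProductSpace ℂ H] [CompleteSpace H]

/-- Real part of the self inner product. -/
private lemma re_inner_self (x : H) : (⟪x, x⟫_ℂ).re = ‖x‖ ^ 2 := by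
  have h := inner_self_eq_norm_sq (𝕜 := ℂ) x
  simpa using h

/-- Buzano's inequality. -/
private lemma buzano_s10 (u v e : H) (he : ‖e‖ = 1) :
    2 * ‖⟪u, e⟫_ℂ * ⟪e, v⟫_ℂ‖ ≤ ‖u‖ * ‖v‖ + ‖⟪u, v⟫_ℂ‖ := by
  set z := ((2 : ℂ) * ⟪e, v⟫_ℂ) • e - v with hzdef
  have hnz : ‖z‖ = ‖v‖ := by
    have h : ‖z‖ ^ 2 = ‖v‖ ^ 2 := by
      have hexp : ‖z‖ ^ 2 = ‖((2 : ℂ) * ⟪e, v⟫_ℂ) • e‖ ^ 2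
          - 2 * RCLike.re ⟪((2 : ℂ) * ⟪e, v⟫_ℂ) • e, v⟫_ℂ + ‖v‖ ^ 2 := by
        rw [hzdef]; exact norm_sub_sq (𝕜 := ℂ) _ _
      have hnorm : ‖((2 : ℂ) * ⟪e, v⟫_ℂ) • e‖ = 2 * ‖⟪e, v⟫_ℂ‖ := by
        rw [norm_smul, he, mul_one]
        simp
      have hre : RCLike.re ⟪((2 : ℂ) * ⟪e, v⟫_ℂ) • e, v⟫_ℂ
          = 2 * ‖⟪e, v⟫_ℂ‖ ^ 2 := by
        rw [inner_smul_left]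
        have hc : (starRingEnd ℂ) ((2 : ℂ) * ⟪e, v⟫_ℂ) * ⟪e, v⟫_ℂ
            = ((2 * ‖⟪e, v⟫_ℂ‖ ^ 2 : ℝ) : ℂ) := by
          rw [map_mul, show (starRingEnd ℂ) (2 : ℂ) = 2 from map_ofNat _ 2, mul_assoc,
            mul_comm ((starRingEnd ℂ) ⟪e, v⟫_ℂ) ⟪e, v⟫_ℂ, Complex.mul_conj]
          push_cast [Complex.sq_norm]
          ring
        rw [hc]
        simp [← Complex.ofReal_pow]
      rw [hexp, hnorm, hre]
      ring
    calc ‖z‖ = Real.sqrt (‖z‖ ^ 2) := (Real.sqrt_sq (norm_nonneg _)).symm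
      _ = Real.sqrt (‖v‖ ^ 2) := by rw [h]
      _ = ‖v‖ := Real.sqrt_sq (norm_nonneg _)
  have hiz : ⟪u, z⟫_ℂ = 2 * ⟪e, v⟫_ℂ * ⟪u, e⟫_ℂ - ⟪u, v⟫_ℂ := by
    rw [hzdef, inner_sub_right, inner_smul_right]
  have hCS : ‖⟪u, z⟫_ℂ‖ ≤ ‖u‖ * ‖v‖ := by
    rw [← hnz]; exact norm_inner_le_norm u z
  have key : 2 * ‖⟪u, e⟫_ℂ * ⟪e, v⟫_ℂ‖ = ‖⟪u, z⟫_ℂ + ⟪u, v⟫_ℂ‖ := by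
    have h2 : ⟪u, z⟫_ℂ + ⟪u, v⟫_ℂ = 2 * ⟪e, v⟫_ℂ * ⟪u, e⟫_ℂ := by rw [hiz]; ring
    rw [h2]
    simp only [norm_mul, Complex.norm_two]
    ring
  rw [key]
  calc ‖⟪u, z⟫_ℂ + ⟪u, v⟫_ℂ‖ ≤ ‖⟪u, z⟫_ℂ‖ + ‖⟪u, v⟫_ℂ‖ :=
        norm_add_le _ _
    _ ≤ ‖u‖ * ‖v‖ + ‖⟪u, v⟫_ℂ‖ := by linarith

/-- Powers of an `A`-selfadjoint operator are `A`-selfadjoint. -/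
private lemma pow_prop (R U : H →L[ℂ] H)
    (hU : ∀ x y : H, ⟪R (U x), R y⟫_ℂ = ⟪R x, R (U y)⟫_ℂ) (n : ℕ) :
    ∀ x y : H, ⟪R ((U ^ n) x), R y⟫_ℂ = ⟪R x, R ((U ^ n) y)⟫_ℂ := by
  induction n with
  | zero => intro x y; simp [ContinuousLinearMap.one_apply]
  | succ n ih =>
    intro x y
    have hx : (U ^ (n+1)) x = (U ^ n) (U x) := by
      rw [pow_succ, ContinuousLinearMap.mul_apply]
    have hy : (U ^ (n+1)) y = U ((U ^ n) y) := by
      rw [pow_succ', ContinuousLinearMap.mul_apply]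
    rw [hx, hy, ih (U x) y, hU x ((U ^ n) y)]

/-- The basic Schwarz-type step. -/
private lemma base_step (R V : H →L[ℂ] H)
    (hV : ∀ x y : H, ⟪R (V x), R y⟫_ℂ = ⟪R x, R (V y)⟫_ℂ) (z : H) :
    ‖R (V z)‖ ^ 2 ≤ ‖R z‖ * ‖R (V (V z))‖ := by
  have h1 : (‖R (V z)‖ : ℝ) ^ 2 = (⟪R (V z), R (V z)⟫_ℂ).re := (re_inner_self _).symm
  rw [h1, hV z (V z)]
  calc (⟪R z, R (V (V z))⟫_ℂ).re ≤ ‖⟪R z, R (V (V z))⟫_ℂ‖ := Complex.re_le_norm _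
    _ ≤ ‖R z‖ * ‖R (V (V z))‖ := by exact norm_inner_le_norm _ _

/-- Seminorm bound for `A`-selfadjoint operators: `‖R (U x)‖ ≤ ‖U‖ * ‖R x‖`. -/
private lemma selfadj_bound (R U : H →L[ℂ] H)
    (hU : ∀ x y : H, ⟪R (U x), R y⟫_ℂ = ⟪R x, R (U y)⟫_ℂ) (x : H) :
    ‖R (U x)‖ ≤ ‖U‖ * ‖R x‖ := by
  have main : ∀ n : ℕ, ‖R (U x)‖ ^ (2 ^ n) ≤ ‖R x‖ ^ (2 ^ n - 1) * ‖R ((U ^ (2 ^ n)) x)‖ := by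
    intro n
    induction n with
    | zero => simp [pow_one]
    | succ n ih =>
      have hstep := base_step R (U ^ (2 ^ n)) (pow_prop R U hU (2 ^ n)) x
      have hcomp : (U ^ (2 ^ n)) ((U ^ (2 ^ n)) x) = (U ^ (2 ^ (n + 1))) x := by
        rw [← ContinuousLinearMap.mul_apply, ← pow_add]
        congr 1
        rw [← two_mul, pow_succ']
      rw [hcomp] at hstep
      have h1 : ‖R (U x)‖ ^ (2 ^ (n + 1)) = (‖R (U x)‖ ^ (2 ^ n)) ^ 2 := by
        rw [← pow_mul, pow_succ]
      have h2 : (‖R (U x)‖ ^ (2 ^ n)) ^ 2 ≤ (‖R x‖ ^ (2 ^ n - 1) * ‖R ((U ^ (2 ^ n)) x)‖) ^ 2 :=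
        pow_le_pow_left₀ (by positivity) ih 2
      have h3 : (‖R x‖ ^ (2 ^ n - 1) * ‖R ((U ^ (2 ^ n)) x)‖) ^ 2
          = ‖R x‖ ^ (2 * (2 ^ n - 1)) * ‖R ((U ^ (2 ^ n)) x)‖ ^ 2 := by
        rw [mul_pow, ← pow_mul]; ring_nf
      have h4 : ‖R x‖ ^ (2 * (2 ^ n - 1)) * ‖R ((U ^ (2 ^ n)) x)‖ ^ 2
          ≤ ‖R x‖ ^ (2 * (2 ^ n - 1)) * (‖R x‖ * ‖R ((U ^ (2 ^ (n + 1))) x)‖) :=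
        mul_le_mul_of_nonneg_left hstep (by positivity)
      have h5 : ‖R x‖ ^ (2 * (2 ^ n - 1)) * (‖R x‖ * ‖R ((U ^ (2 ^ (n + 1))) x)‖)
          = ‖R x‖ ^ (2 ^ (n + 1) - 1) * ‖R ((U ^ (2 ^ (n + 1))) x)‖ := by
        rw [← mul_assoc, ← pow_succ]
        congr 2
        have h1n : 1 ≤ 2 ^ n := Nat.one_le_two_pow
        have h2n : (2 : ℕ) ^ (n + 1) = 2 * 2 ^ n := by rw [pow_succ']
        omega
      calc ‖R (U x)‖ ^ (2 ^ (n + 1)) = (‖R (U x)‖ ^ (2 ^ n)) ^ 2 := h1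
        _ ≤ (‖R x‖ ^ (2 ^ n - 1) * ‖R ((U ^ (2 ^ n)) x)‖) ^ 2 := h2
        _ = ‖R x‖ ^ (2 * (2 ^ n - 1)) * ‖R ((U ^ (2 ^ n)) x)‖ ^ 2 := h3
        _ ≤ _ := h4
        _ = _ := h5
  by_cases ha : ‖R x‖ = 0
  · have h := base_step R U hU x
    rw [ha, zero_mul] at h
    have : ‖R (U x)‖ = 0 := by nlinarith [norm_nonneg (R (U x))]
    rw [this, ha, mul_zero]
  · have ha' : 0 < ‖R x‖ := lt_of_le_of_ne (norm_nonneg _) (Ne.symm ha)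
    by_contra hcon
    push_neg at hcon
    have hb : 0 < ‖R (U x)‖ := lt_of_le_of_lt (by positivity) hcon
    have hc : 0 < ‖U‖ := by
      rcases eq_or_lt_of_le (norm_nonneg U) with h | h
      · exfalso
        have : U = 0 := by rwa [eq_comm, norm_eq_zero] at h
        rw [this] at hb; simp at hb
      · exact h
    set a := ‖R x‖
    set b := ‖R (U x)‖
    set c := ‖U‖
    set K := ‖R‖ * ‖x‖ with hKdef
    have hKa : a ≤ K := R.le_opNorm x
    have hK : 0 < K := lt_of_lt_of_le ha' hKa
    have hr : 1 < b / (c * a) := (one_lt_div (by positivity)).mpr hcon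
    have key : ∀ n : ℕ, (b / (c * a)) ^ (2 ^ n) ≤ K / a := by
      intro n
      have h1 := main n
      have hop : ‖R ((U ^ (2 ^ n)) x)‖ ≤ ‖R‖ * (c ^ (2 ^ n) * ‖x‖) := by
        calc ‖R ((U ^ (2 ^ n)) x)‖ ≤ ‖R‖ * ‖(U ^ (2 ^ n)) x‖ := R.le_opNorm _
          _ ≤ ‖R‖ * (‖U ^ (2 ^ n)‖ * ‖x‖) :=
              mul_le_mul_of_nonneg_left ((U ^ (2 ^ n)).le_opNorm x) (norm_nonneg R)
          _ ≤ ‖R‖ * (c ^ (2 ^ n) * ‖x‖) := by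
              have := norm_pow_le' U (n := 2 ^ n) (by positivity)
              have h' : ‖U ^ 2 ^ n‖ * ‖x‖ ≤ c ^ 2 ^ n * ‖x‖ :=
                mul_le_mul_of_nonneg_right this (norm_nonneg x)
              exact mul_le_mul_of_nonneg_left h' (norm_nonneg R)
      have hN : 1 ≤ 2 ^ n := Nat.one_le_two_pow
      have h3 : a * b ^ (2 ^ n) ≤ a ^ (2 ^ n) * (K * c ^ (2 ^ n)) := by
        have h2 : b ^ (2 ^ n) ≤ a ^ (2 ^ n - 1) * (‖R‖ * (c ^ (2 ^ n) * ‖x‖)) :=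
          h1.trans (mul_le_mul_of_nonneg_left hop (by positivity))
        have h4 := mul_le_mul_of_nonneg_left h2 ha'.le
        calc a * b ^ (2 ^ n) ≤ a * (a ^ (2 ^ n - 1) * (‖R‖ * (c ^ (2 ^ n) * ‖x‖))) := h4
          _ = a ^ (2 ^ n - 1 + 1) * (K * c ^ (2 ^ n)) := by rw [hKdef]; ring
          _ = a ^ (2 ^ n) * (K * c ^ (2 ^ n)) := by congr 2; omega
      rw [div_pow, div_le_div_iff₀ (by positivity) ha', mul_pow]
      nlinarith [h3]
    obtain ⟨m, hm⟩ := pow_unbounded_of_one_lt (K / a) hr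
    have h5 : (b / (c * a)) ^ m ≤ (b / (c * a)) ^ (2 ^ m) :=
      pow_le_pow_right₀ hr.le (Nat.lt_two_pow_self (n := m)).le
    linarith [key m]

/-- Seminorm bound for operators admitting an `A`-adjoint. -/
private lemma adj_bound (R S S' : H →L[ℂ] H)
    (hS : ∀ x y : H, ⟪R (S x), R y⟫_ℂ = ⟪R x, R (S' y)⟫_ℂ)
    (hS' : ∀ x y : H, ⟪R (S' x), R y⟫_ℂ = ⟪R x, R (S y)⟫_ℂ) (x : H) :
    ‖R (S x)‖ ≤ Real.sqrt ‖S' ∘L S‖ * ‖R x‖ := by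
  set U := S' ∘L S with hU
  have hUprop : ∀ x y : H, ⟪R (U x), R y⟫_ℂ = ⟪R x, R (U y)⟫_ℂ := by
    intro x y
    calc ⟪R (S' (S x)), R y⟫_ℂ = ⟪R (S x), R (S y)⟫_ℂ := hS' (S x) y
      _ = ⟪R x, R (S' (S y))⟫_ℂ := hS x (S y)
  have hsq : ‖R (S x)‖ ^ 2 ≤ ‖U‖ * ‖R x‖ ^ 2 := by
    have h1 : (‖R (S x)‖ : ℝ) ^ 2 = (⟪R (S x), R (S x)⟫_ℂ).re := (re_inner_self _).symm
    have h2 : ⟪R (S x), R (S x)⟫_ℂ = ⟪R x, R (U x)⟫_ℂ := hS x (S x)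
    rw [h1, h2]
    calc (⟪R x, R (U x)⟫_ℂ).re ≤ ‖⟪R x, R (U x)⟫_ℂ‖ := Complex.re_le_norm _
      _ ≤ ‖R x‖ * ‖R (U x)‖ := by exact norm_inner_le_norm _ _
      _ ≤ ‖R x‖ * (‖U‖ * ‖R x‖) := mul_le_mul_of_nonneg_left (selfadj_bound R U hUprop x)
          (norm_nonneg _)
      _ = ‖U‖ * ‖R x‖ ^ 2 := by ring
  calc ‖R (S x)‖ = Real.sqrt (‖R (S x)‖ ^ 2) := (Real.sqrt_sq (norm_nonneg _)).symm
    _ ≤ Real.sqrt (‖U‖ * ‖R x‖ ^ 2) := Real.sqrt_le_sqrt hsq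
    _ = Real.sqrt ‖U‖ * ‖R x‖ := by
        rw [Real.sqrt_mul (norm_nonneg _), Real.sqrt_sq (norm_nonneg _)]

set_option maxHeartbeats 2000000 in
theorem stmt10 (A : H →L[ℂ] H) (hA : A.IsPositive) (T Ts : H →L[ℂ] H)
    (hadj : ∀ x y : H, ipA A (T x) y = ipA A x (Ts y))
    (α β : ℝ) (hα : α ∈ Set.Icc (0 : ℝ) 1) (hβ : 0 ≤ β) :
    wA A T ^ 4 ≤
      ((1 + α + 2 * β) / (8 * (1 + β))) * opA A (Ts ∘L T + T ∘L Ts) ^ 2 +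
        ((1 - α) / (2 * (1 + β))) * wA A (T ∘L T) ^ 2 := by
  obtain ⟨R, hRsa, -, hR2⟩ :=
    CFC.exists_sqrt_of_isSelfAdjoint_of_quasispectrumRestricts hA.isSelfAdjoint hA.spectrumRestricts
  have hRadj : ∀ a b : H, ⟪R a, b⟫_ℂ = ⟪a, R b⟫_ℂ := by
    intro a b
    have h := ContinuousLinearMap.isSelfAdjoint_iff'.mp hRsa
    conv_lhs => rw [← h]
    exact ContinuousLinearMap.adjoint_inner_left R b a
  have hAx : ∀ x, A x = R (R x) := by
    intro x; rw [← hR2, ContinuousLinearMap.mul_apply]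
  have hip : ∀ x y, ipA A x y = ⟪R x, R y⟫_ℂ := by
    intro x y
    show ⟪A x, y⟫_ℂ = _
    rw [hAx, hRadj]
  have hnA : ∀ x, nA A x = ‖R x‖ := by
    intro x
    show Real.sqrt (ipA A x x).re = _
    rw [hip, re_inner_self, Real.sqrt_sq (norm_nonneg _)]
  have hT : ∀ x y, ⟪R (T x), R y⟫_ℂ = ⟪R x, R (Ts y)⟫_ℂ := by
    intro x y; rw [← hip, ← hip]; exact hadj x y
  have hTs : ∀ x y, ⟪R (Ts x), R y⟫_ℂ = ⟪R x, R (T y)⟫_ℂ := by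
    intro x y
    calc ⟪R (Ts x), R y⟫_ℂ = (starRingEnd ℂ) ⟪R y, R (Ts x)⟫_ℂ := (inner_conj_symm _ _).symm
      _ = (starRingEnd ℂ) ⟪R (T y), R x⟫_ℂ := by rw [hT y x]
      _ = ⟪R x, R (T y)⟫_ℂ := inner_conj_symm _ _
  -- bounds for Tx and Ts x in the seminorm
  set CT := Real.sqrt ‖Ts ∘L T‖ with hCTdef
  set CTs := Real.sqrt ‖T ∘L Ts‖ with hCTsdef
  have hCT0 : 0 ≤ CT := Real.sqrt_nonneg _
  have hCTs0 : 0 ≤ CTs := Real.sqrt_nonneg _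
  have hbT : ∀ x, ‖R (T x)‖ ≤ CT * ‖R x‖ := fun x => adj_bound R T Ts hT hTs x
  have hbTs : ∀ x, ‖R (Ts x)‖ ≤ CTs * ‖R x‖ := fun x => adj_bound R Ts T hTs hT x
  -- boundedness of the two sSup index sets
  set D := Ts ∘L T + T ∘L Ts with hDdef
  have bddN : BddAbove {c : ℝ | ∃ x : H, nA A x = 1 ∧ c = nA A (D x)} := by
    refine ⟨CTs * CT + CT * CTs, ?_⟩
    rintro c ⟨x, hx1, rfl⟩
    rw [hnA] at hx1 ⊢
    have hDx : D x = Ts (T x) + T (Ts x) := rfl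
    calc ‖R (D x)‖ = ‖R (Ts (T x)) + R (T (Ts x))‖ := by rw [hDx, map_add]
      _ ≤ ‖R (Ts (T x))‖ + ‖R (T (Ts x))‖ := norm_add_le _ _
      _ ≤ CTs * ‖R (T x)‖ + CT * ‖R (Ts x)‖ := add_le_add (hbTs _) (hbT _)
      _ ≤ CTs * (CT * ‖R x‖) + CT * (CTs * ‖R x‖) := by
          refine add_le_add (mul_le_mul_of_nonneg_left (hbT x) hCTs0)
            (mul_le_mul_of_nonneg_left (hbTs x) hCT0)
      _ = CTs * CT + CT * CTs := by rw [hx1]; ring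
  have bddM : BddAbove {c : ℝ | ∃ x : H, nA A x = 1 ∧ c = ‖ipA A ((T ∘L T) x) x‖} := by
    refine ⟨CT * CT, ?_⟩
    rintro c ⟨x, hx1, rfl⟩
    rw [hnA] at hx1
    have h1 : ipA A ((T ∘L T) x) x = ⟪R (T (T x)), R x⟫_ℂ := hip _ _
    calc ‖ipA A ((T ∘L T) x) x‖ = ‖⟪R (T (T x)), R x⟫_ℂ‖ := by
          rw [h1]
      _ ≤ ‖R (T (T x))‖ * ‖R x‖ := norm_inner_le_norm _ _
      _ ≤ (CT * ‖R (T x)‖) * ‖R x‖ := mul_le_mul_of_nonneg_right (hbT _) (norm_nonneg _)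
      _ ≤ (CT * (CT * ‖R x‖)) * ‖R x‖ := by
          refine mul_le_mul_of_nonneg_right (mul_le_mul_of_nonneg_left (hbT x) hCT0) (norm_nonneg _)
      _ = CT * CT := by rw [hx1]; ring
  set N := opA A D with hNdef
  set M := wA A (T ∘L T) with hMdef
  have hN0 : 0 ≤ N := Real.sSup_nonneg (by rintro c ⟨x, hx1, rfl⟩; exact Real.sqrt_nonneg _)
  have hM0 : 0 ≤ M := Real.sSup_nonneg
    (by rintro c ⟨x, hx1, rfl⟩; exact norm_nonneg _)
  have hβ1 : (0:ℝ) < 1 + β := by linarith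
  -- right hand side
  set RHS := ((1 + α + 2 * β) / (8 * (1 + β))) * N ^ 2 + ((1 - α) / (2 * (1 + β))) * M ^ 2
    with hRHSdef
  have hRHS0 : 0 ≤ RHS := by
    have h1 : 0 ≤ (1 + α + 2 * β) / (8 * (1 + β)) := by
      apply div_nonneg (by linarith [hα.1]) (by linarith)
    have h2 : 0 ≤ (1 - α) / (2 * (1 + β)) := by
      apply div_nonneg (by linarith [hα.2]) (by linarith)
    have h3 := mul_nonneg h1 (sq_nonneg N)
    have h4 := mul_nonneg h2 (sq_nonneg M)
    rw [hRHSdef]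
    linarith
  -- pointwise bound
  have pointwise : ∀ x : H, nA A x = 1 → ‖ipA A (T x) x‖ ^ 4 ≤ RHS := by
    intro x hx1
    rw [hnA] at hx1
    set u := R (T x)
    set v := R (Ts x)
    set e := R x
    set w := ‖ipA A (T x) x‖ with hwdef
    have hue : ⟪u, e⟫_ℂ = ipA A (T x) x := (hip _ _).symm
    have hev : ⟪e, v⟫_ℂ = ipA A (T x) x := by
      rw [show ⟪e, v⟫_ℂ = ipA A x (Ts x) from (hip _ _).symm, ← hadj x x]
    set q := ‖ipA A ((T ∘L T) x) x‖ with hqdef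
    have huv : ‖⟪u, v⟫_ℂ‖ = q := by
      rw [hqdef, show ipA A ((T ∘L T) x) x = ⟪R (T (T x)), R x⟫_ℂ from hip _ _, hT (T x) x]
    -- Buzano
    have hbuz := buzano_s10 u v e hx1
    rw [hue, hev] at hbuz
    have habs2 : ‖ipA A (T x) x * ipA A (T x) x‖ = w ^ 2 := by
      rw [norm_mul, hwdef]; ring
    rw [habs2, huv] at hbuz
    have h2w : 2 * w ^ 2 ≤ ‖u‖ * ‖v‖ + q := hbuz
    set p := ‖u‖ * ‖v‖ with hpdef
    have hq0 : 0 ≤ q := norm_nonneg _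
    have hp0 : 0 ≤ p := by positivity
    have hw0 : 0 ≤ w := norm_nonneg _
    have hqp : q ≤ p := by
      rw [← huv, hpdef]
      exact norm_inner_le_norm _ _
    -- 2p ≤ s
    set s := nA A (D x) with hsdef
    have hps : 2 * p ≤ s := by
      have hD1 : ipA A (D x) x = ⟪u, u⟫_ℂ + ⟪v, v⟫_ℂ := by
        have hDx : D x = Ts (T x) + T (Ts x) := rfl
        rw [hip, hDx, map_add, inner_add_left]
        congr 1
        · rw [hTs (T x) x]
        · rw [hT (Ts x) x]
      have hre : (ipA A (D x) x).re = ‖u‖ ^ 2 + ‖v‖ ^ 2 := by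
        rw [hD1, Complex.add_re]
        have h1 : (⟪u, u⟫_ℂ).re = ‖u‖ ^ 2 := re_inner_self u
        have h2 : (⟪v, v⟫_ℂ).re = ‖v‖ ^ 2 := re_inner_self v
        rw [h1, h2]
      have hles : ‖u‖ ^ 2 + ‖v‖ ^ 2 ≤ s := by
        rw [← hre]
        calc (ipA A (D x) x).re ≤ ‖ipA A (D x) x‖ := Complex.re_le_norm _
          _ = ‖⟪R (D x), R x⟫_ℂ‖ := by rw [hip]
          _ ≤ ‖R (D x)‖ * ‖R x‖ := norm_inner_le_norm _ _
          _ = s := by rw [hx1, mul_one, hsdef, hnA]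
      nlinarith [sq_nonneg (‖u‖ - ‖v‖)]
    have hs0 : 0 ≤ s := Real.sqrt_nonneg _
    have hsN : s ≤ N := le_csSup bddN ⟨x, by rw [hnA]; exact hx1, rfl⟩
    have hqM : q ≤ M := le_csSup bddM ⟨x, by rw [hnA]; exact hx1, rfl⟩
    -- final algebra
    have hα0 := hα.1
    have hα1 := hα.2
    have h1 : (2 * w ^ 2) ^ 2 ≤ (p + q) ^ 2 := pow_le_pow_left₀ (by positivity) h2w 2
    have h2 : (1 + β) * (p + q) ^ 2 ≤ 2 * (1 + α + 2 * β) * p ^ 2 + 2 * (1 - α) * q ^ 2 := by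
      nlinarith [mul_nonneg (add_nonneg hα0 hβ) (mul_nonneg (sub_nonneg.2 hqp) (add_nonneg hp0 hq0)),
        sq_nonneg (p - q), sq_nonneg (p + q)]
    have h3 : (2 * p) ^ 2 ≤ N ^ 2 := pow_le_pow_left₀ (by positivity) (le_trans hps hsN) 2
    have h4 : q ^ 2 ≤ M ^ 2 := pow_le_pow_left₀ hq0 hqM 2
    have e1 : 2 * (1 + β) * ((2 * w ^ 2) ^ 2) ≤ 2 * (1 + β) * ((p + q) ^ 2) :=
      mul_le_mul_of_nonneg_left h1 (by linarith)
    have e3 : (1 + α + 2 * β) * ((2 * p) ^ 2) ≤ (1 + α + 2 * β) * N ^ 2 :=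
      mul_le_mul_of_nonneg_left h3 (by linarith)
    have e4 : (4 * (1 - α)) * q ^ 2 ≤ (4 * (1 - α)) * M ^ 2 :=
      mul_le_mul_of_nonneg_left h4 (by linarith)
    have key : w ^ 4 * (8 * (1 + β)) ≤ (1 + α + 2 * β) * N ^ 2 + 4 * (1 - α) * M ^ 2 := by
      nlinarith [e1, e3, e4, h2, hβ1]
    rw [hRHSdef]
    have hfin : w ^ 4 ≤ ((1 + α + 2 * β) * N ^ 2 + 4 * (1 - α) * M ^ 2) / (8 * (1 + β)) :=
      (le_div_iff₀ (by linarith)).mpr key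
    calc w ^ 4 ≤ ((1 + α + 2 * β) * N ^ 2 + 4 * (1 - α) * M ^ 2) / (8 * (1 + β)) := hfin
      _ = ((1 + α + 2 * β) / (8 * (1 + β))) * N ^ 2 + ((1 - α) / (2 * (1 + β))) * M ^ 2 := by
          field_simp
          ring
  -- conclude via sSup
  set r := Real.sqrt (Real.sqrt RHS) with hrdef
  have hr0 : 0 ≤ r := Real.sqrt_nonneg _
  have hsup_le : wA A T ≤ r := by
    apply Real.sSup_le _ hr0
    rintro c ⟨x, hx1, rfl⟩
    have h := pointwise x hx1
    have habs : 0 ≤ ‖ipA A (T x) x‖ := norm_nonneg _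
    have h1 : (‖ipA A (T x) x‖ ^ 2) ^ 2 ≤ RHS := by
      rw [← pow_mul]; exact h
    have h2 : ‖ipA A (T x) x‖ ^ 2 ≤ Real.sqrt RHS := by
      calc ‖ipA A (T x) x‖ ^ 2
          = Real.sqrt ((‖ipA A (T x) x‖ ^ 2) ^ 2) :=
            (Real.sqrt_sq (by positivity)).symm
        _ ≤ Real.sqrt RHS := Real.sqrt_le_sqrt h1
    calc ‖ipA A (T x) x‖
        = Real.sqrt (‖ipA A (T x) x‖ ^ 2) := (Real.sqrt_sq habs).symm
      _ ≤ Real.sqrt (Real.sqrt RHS) := Real.sqrt_le_sqrt h2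
  have hsup0 : 0 ≤ wA A T :=
    Real.sSup_nonneg (by rintro c ⟨x, hx1, rfl⟩; exact norm_nonneg _)
  have hr4 : r ^ 4 = RHS := by
    have hsr : 0 ≤ Real.sqrt RHS := Real.sqrt_nonneg _
    calc r ^ 4 = (r ^ 2) ^ 2 := by ring
      _ = Real.sqrt RHS ^ 2 := by rw [hrdef, Real.sq_sqrt hsr]
      _ = RHS := Real.sq_sqrt hRHS0
  calc wA A T ^ 4 ≤ r ^ 4 := pow_le_pow_left₀ hsup0 hsup_le 4
    _ = RHS := hr4
end
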